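/- For the Grushin inversion, the mixed (off-diagonal) Jacobian combinations all vanish: for i ≠ i′, Σ_k (∂x_i/∂x̃_k)(∂x_{i′}/∂x̃_k) + |x̃|^{2γ} Σ_h (∂x_i/∂ỹ_h)(∂x_{i′}/∂ỹ_h) = 0; for j ≠ j′, Σ_k (∂y_j/∂x̃_k)(∂y_{j′}/∂x̃_k) + |x̃|^{2γ} Σ_h (∂y_j/∂ỹ_h)(∂y_{j′}/∂ỹ_h) = 0; and for all i,j, Σ_k (∂x_i/∂x̃_k)(∂y_j/∂x̃_k) + |x̃|^{2γ} Σ_h (∂x_i/∂ỹ_h)(∂y_j/∂ỹ_h) = 0. -/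

import Mathlib

open MeasureTheory Real

noncomputable section

variable {N l : ℕ}

/-- squared Euclidean norm -/
def nsq {n : ℕ} (x : Fin n → ℝ) : ℝ := ∑ i, x i ^ 2

/-- partial derivative in the `i`-th `x` direction -/
def pdx (u : (Fin N → ℝ) × (Fin l → ℝ) → ℝ) (i : Fin N)
    (z : (Fin N → ℝ) × (Fin l → ℝ)) : ℝ :=
  deriv (fun t => u (Function.update z.1 i t, z.2)) (z.1 i)

/-- partial derivative in the `j`-th `y` direction -/
def pdy (u : (Fin N → ℝ) × (Fin l → ℝ) → ℝ) (j : Fin l)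
    (z : (Fin N → ℝ) × (Fin l → ℝ)) : ℝ :=
  deriv (fun t => u (z.1, Function.update z.2 j t)) (z.2 j)

/-- Grushin operator `Δ_γ u = Δ_x u + |x|^{2γ} Δ_y u` -/
def grushinLap (γ : ℝ) (u : (Fin N → ℝ) × (Fin l → ℝ) → ℝ)
    (z : (Fin N → ℝ) × (Fin l → ℝ)) : ℝ :=
  (∑ i, pdx (pdx u i) i z) + (nsq z.1) ^ γ * ∑ j, pdy (pdy u j) j z

/-- the Grushin distance to the origin:
`d(z,0) = ((1/(1+γ)²)|x|^{2+2γ} + |y|²)^{1/(2+2γ)}` (note `|x|^{2+2γ} = (nsq x)^{1+γ}`). -/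
def gd (γ : ℝ) (z : (Fin N → ℝ) × (Fin l → ℝ)) : ℝ :=
  ((1 / (1 + γ) ^ 2) * (nsq z.1) ^ (1 + γ) + nsq z.2) ^ (1 / (2 + 2 * γ))

/-- the Grushin inversion `x̃ = x/d², ỹ = y/d^{2+2γ}` -/
def ginv (γ : ℝ) (z : (Fin N → ℝ) × (Fin l → ℝ)) : (Fin N → ℝ) × (Fin l → ℝ) :=
  (fun i => z.1 i / gd γ z ^ 2, fun j => z.2 j / gd γ z ^ (2 + 2 * γ))

/-- divergence of a vector field on `ℝ^N × ℝ^l` -/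
def gdiv (X : (Fin N → ℝ) × (Fin l → ℝ) → (Fin N → ℝ) × (Fin l → ℝ))
    (z : (Fin N → ℝ) × (Fin l → ℝ)) : ℝ :=
  (∑ i, pdx (fun w => (X w).1 i) i z) + ∑ j, pdy (fun w => (X w).2 j) j z

/-- Euclidean dot product on `ℝ^N × ℝ^l` -/
def gdot (v w : (Fin N → ℝ) × (Fin l → ℝ)) : ℝ :=
  (∑ i, v.1 i * w.1 i) + ∑ j, v.2 j * w.2 j


/-- auxiliary: the base quantity -/
def gA (γ : ℝ) (z : (Fin N → ℝ) × (Fin l → ℝ)) : ℝ :=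
  (1 / (1 + γ) ^ 2) * (nsq z.1) ^ (1 + γ) + nsq z.2

lemma nsq_nonneg {n : ℕ} (x : Fin n → ℝ) : 0 ≤ nsq x :=
  Finset.sum_nonneg fun i _ => sq_nonneg _


lemma nsq_pos {n : ℕ} {x : Fin n → ℝ} (hx : x ≠ 0) : 0 < nsq x := by
  rcases Function.ne_iff.1 hx with ⟨i, hi⟩
  have h0 : 0 < x i ^ 2 := by
    have : x i ≠ 0 := hi
    positivity
  exact lt_of_lt_of_le h0 (Finset.single_le_sum (fun j _ => sq_nonneg (x j)) (Finset.mem_univ i))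


lemma nsq_update {n : ℕ} (x : Fin n → ℝ) (k : Fin n) (t : ℝ) :
    nsq (Function.update x k t) = nsq x - x k ^ 2 + t ^ 2 := by
  have h : ∀ i, Function.update x k t i ^ 2 = Function.update (fun i => x i ^ 2) k (t ^ 2) i := by
    intro i
    rcases eq_or_ne i k with rfl | hik
    · simp
    · simp [Function.update_of_ne hik]
  unfold nsq
  rw [Finset.sum_congr rfl fun i _ => h i, Finset.sum_update_of_mem (Finset.mem_univ k),
    Finset.sum_sdiff_eq_sub (by simp : {k} ⊆ Finset.univ)]
  simp [nsq]
  ring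


lemma gA_nonneg (γ : ℝ) (hγ : 0 ≤ γ) (z : (Fin N → ℝ) × (Fin l → ℝ)) : 0 ≤ gA γ z := by
  have h1 : (0:ℝ) < 1 + γ := by linarith
  have := nsq_nonneg z.1
  have := nsq_nonneg z.2
  have : (0:ℝ) ≤ (nsq z.1) ^ (1 + γ) := Real.rpow_nonneg ‹0 ≤ nsq z.1› _
  unfold gA
  positivity


lemma gA_pos (γ : ℝ) (hγ : 0 ≤ γ) {z : (Fin N → ℝ) × (Fin l → ℝ)} (hx : z.1 ≠ 0) :
    0 < gA γ z := by
  have h1 : (0:ℝ) < 1 + γ := by linarith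
  have hs : 0 < nsq z.1 := nsq_pos hx
  have h2 : (0:ℝ) < (nsq z.1) ^ (1 + γ) := Real.rpow_pos_of_pos hs _
  have := nsq_nonneg z.2
  unfold gA
  positivity


lemma gd_sq (γ : ℝ) (hγ : 0 ≤ γ) (w : (Fin N → ℝ) × (Fin l → ℝ)) :
    gd γ w ^ 2 = gA γ w ^ (1 / (1 + γ)) := by
  have hA : 0 ≤ gA γ w := gA_nonneg γ hγ w
  have h1 : (1:ℝ) + γ ≠ 0 := by positivity
  have h2 : (2:ℝ) + 2 * γ ≠ 0 := by positivity
  have hgA : (1 / (1 + γ) ^ 2 * nsq w.1 ^ (1 + γ) + nsq w.2) = gA γ w := rfl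
  rw [gd, hgA, ← Real.rpow_natCast (gA γ w ^ (1 / (2 + 2 * γ))) 2, ← Real.rpow_mul hA]
  · norm_num
    congr 1
    field_simp


lemma gd_rpow (γ : ℝ) (hγ : 0 ≤ γ) (w : (Fin N → ℝ) × (Fin l → ℝ)) :
    gd γ w ^ (2 + 2 * γ) = gA γ w := by
  have hA : 0 ≤ gA γ w := gA_nonneg γ hγ w
  have h2 : (2:ℝ) + 2 * γ ≠ 0 := by positivity
  have hgA : (1 / (1 + γ) ^ 2 * nsq w.1 ^ (1 + γ) + nsq w.2) = gA γ w := rfl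
  rw [gd, hgA, ← Real.rpow_mul hA, one_div_mul_cancel h2, Real.rpow_one]


lemma pdx_ginv_fst (γ : ℝ) (hγ : 0 ≤ γ) (z : (Fin N → ℝ) × (Fin l → ℝ)) (hx : z.1 ≠ 0)
    (i k : Fin N) :
    pdx (fun w => (ginv γ w).1 i) k z =
      (if i = k then 1 else 0) / gA γ z ^ (1/(1+γ))
        - (2 / (1+γ)^2 * nsq z.1 ^ γ / (gA γ z * gA γ z ^ (1/(1+γ)))) * z.1 i * z.1 k := by
  have h1 : (0:ℝ) < 1 + γ := by linarith
  have hs : 0 < nsq z.1 := nsq_pos hx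
  have hA : 0 < gA γ z := gA_pos γ hγ hx
  have hP : 0 < gA γ z ^ (1/(1+γ)) := Real.rpow_pos_of_pos hA _
  -- the function in one variable
  have hfun : (fun t => (ginv γ (Function.update z.1 k t, z.2)).1 i)
      = fun t => Function.update z.1 k t i /
          (1/(1+γ)^2 * (nsq z.1 - z.1 k^2 + t^2) ^ (1+γ) + nsq z.2) ^ (1/(1+γ)) := by
    funext t
    show Function.update z.1 k t i / gd γ (Function.update z.1 k t, z.2) ^ 2 = _
    rw [gd_sq γ hγ]
    congr 2
    show (1 / (1 + γ) ^ 2) * (nsq (Function.update z.1 k t)) ^ (1 + γ) + nsq z.2 = _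
    rw [nsq_update]
  -- derivative of the inner quadratic
  have hu : HasDerivAt (fun t : ℝ => nsq z.1 - z.1 k^2 + t^2) (2 * z.1 k) (z.1 k) := by
    simpa using (hasDerivAt_pow 2 (z.1 k)).const_add (nsq z.1 - z.1 k ^ 2)
  have hval : nsq z.1 - z.1 k ^ 2 + z.1 k ^ 2 = nsq z.1 := by ring
  have h2 : HasDerivAt (fun t => (nsq z.1 - z.1 k^2 + t^2) ^ (1+γ))
      (2 * z.1 k * (1+γ) * nsq z.1 ^ (1+γ-1)) (z.1 k) := by
    have h2' := hu.rpow_const (p := 1+γ) (Or.inl (by rw [hval]; exact hs.ne'))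
    beta_reduce at h2'
    rw [hval] at h2'
    exact h2'
  have h3 : HasDerivAt (fun t => 1/(1+γ)^2 * (nsq z.1 - z.1 k^2 + t^2) ^ (1+γ) + nsq z.2)
      (1/(1+γ)^2 * (2 * z.1 k * (1+γ) * nsq z.1 ^ (1+γ-1))) (z.1 k) :=
    (h2.const_mul _).add_const _
  have hAval : 1/(1+γ)^2 * (nsq z.1 - z.1 k^2 + (z.1 k)^2) ^ (1+γ) + nsq z.2 = gA γ z := by
    rw [hval]; rfl
  have hAval' : 1/(1+γ)^2 * (nsq z.1) ^ (1+γ) + nsq z.2 = gA γ z := rfl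
  have h4 : HasDerivAt (fun t => (1/(1+γ)^2 * (nsq z.1 - z.1 k^2 + t^2) ^ (1+γ) + nsq z.2) ^ (1/(1+γ)))
      ((1/(1+γ)^2 * (2 * z.1 k * (1+γ) * nsq z.1 ^ (1+γ-1))) * (1/(1+γ)) * gA γ z ^ (1/(1+γ)-1)) (z.1 k) := by
    have h4' := h3.rpow_const (p := 1/(1+γ)) (Or.inl (by beta_reduce; rw [hval]; exact hA.ne'))
    beta_reduce at h4'
    rw [hval, hAval'] at h4'
    exact h4'
  have hDne : (1/(1+γ)^2 * (nsq z.1 - z.1 k^2 + (z.1 k)^2) ^ (1+γ) + nsq z.2) ^ (1/(1+γ)) ≠ 0 := by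
    rw [hval, hAval']; exact hP.ne'
  unfold pdx
  beta_reduce
  rw [hfun]
  rcases eq_or_ne i k with rfl | hik
  · have hnum : HasDerivAt (fun t : ℝ => Function.update z.1 i t i) 1 (z.1 i) := by
      have : (fun t : ℝ => Function.update z.1 i t i) = fun t => t := by
        funext t; simp
      rw [this]; exact hasDerivAt_id _
    have hdiv := hnum.fun_div h4 hDne
    rw [hdiv.deriv]
    beta_reduce
    rw [hval, hAval']
    rw [show (1:ℝ)+γ-1 = γ by ring, Real.rpow_sub hA (1/(1+γ)) 1, Real.rpow_one]
    simp only [if_pos rfl, Function.update_eq_self, eq_self_iff_true, if_true]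
    have h1' : (1:ℝ)+γ ≠ 0 := h1.ne'
    field_simp
  · have hnum : HasDerivAt (fun t : ℝ => Function.update z.1 k t i) 0 (z.1 k) := by
      have : (fun t : ℝ => Function.update z.1 k t i) = fun _ => z.1 i := by
        funext t; simp [Function.update_of_ne hik]
      rw [this]; exact hasDerivAt_const _ _
    have hdiv := hnum.fun_div h4 hDne
    rw [hdiv.deriv]
    beta_reduce
    rw [hval, hAval']
    rw [show (1:ℝ)+γ-1 = γ by ring, Real.rpow_sub hA (1/(1+γ)) 1, Real.rpow_one]
    simp only [if_neg hik, Function.update_eq_self]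
    have h1' : (1:ℝ)+γ ≠ 0 := h1.ne'
    field_simp


lemma pdy_ginv_fst (γ : ℝ) (hγ : 0 ≤ γ) (z : (Fin N → ℝ) × (Fin l → ℝ)) (hx : z.1 ≠ 0)
    (i : Fin N) (h : Fin l) :
    pdy (fun w => (ginv γ w).1 i) h z =
      -(2 / (1+γ) / (gA γ z * gA γ z ^ (1/(1+γ)))) * z.1 i * z.2 h := by
  have h1 : (0:ℝ) < 1 + γ := by linarith
  have hA : 0 < gA γ z := gA_pos γ hγ hx
  have hP : 0 < gA γ z ^ (1/(1+γ)) := Real.rpow_pos_of_pos hA _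
  have hfun : (fun t => (ginv γ (z.1, Function.update z.2 h t)).1 i)
      = fun t => z.1 i /
          (1/(1+γ)^2 * (nsq z.1) ^ (1+γ) + (nsq z.2 - z.2 h^2 + t^2)) ^ (1/(1+γ)) := by
    funext t
    show z.1 i / gd γ (z.1, Function.update z.2 h t) ^ 2 = _
    rw [gd_sq γ hγ]
    congr 2
    show (1 / (1 + γ) ^ 2) * (nsq z.1) ^ (1 + γ) + nsq (Function.update z.2 h t) = _
    rw [nsq_update]
  have hval : nsq z.2 - z.2 h ^ 2 + z.2 h ^ 2 = nsq z.2 := by ring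
  have hAval' : 1/(1+γ)^2 * (nsq z.1) ^ (1+γ) + nsq z.2 = gA γ z := rfl
  have hu : HasDerivAt (fun t : ℝ => nsq z.2 - z.2 h^2 + t^2) (2 * z.2 h) (z.2 h) := by
    simpa using (hasDerivAt_pow 2 (z.2 h)).const_add (nsq z.2 - z.2 h ^ 2)
  have h3 : HasDerivAt (fun t => 1/(1+γ)^2 * (nsq z.1) ^ (1+γ) + (nsq z.2 - z.2 h^2 + t^2))
      (2 * z.2 h) (z.2 h) := hu.const_add _
  have h4 : HasDerivAt
      (fun t => (1/(1+γ)^2 * (nsq z.1) ^ (1+γ) + (nsq z.2 - z.2 h^2 + t^2)) ^ (1/(1+γ)))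
      ((2 * z.2 h) * (1/(1+γ)) * gA γ z ^ (1/(1+γ)-1)) (z.2 h) := by
    have h4' := h3.rpow_const (p := 1/(1+γ)) (Or.inl (by beta_reduce; rw [hval, hAval']; exact hA.ne'))
    beta_reduce at h4'
    rw [hval, hAval'] at h4'
    exact h4'
  have hDne : (1/(1+γ)^2 * (nsq z.1) ^ (1+γ) + (nsq z.2 - z.2 h^2 + (z.2 h)^2)) ^ (1/(1+γ)) ≠ 0 := by
    rw [hval, hAval']; exact hP.ne'
  unfold pdy
  beta_reduce
  rw [hfun]
  have hdiv := (hasDerivAt_const (z.2 h) (z.1 i)).fun_div h4 hDne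
  rw [hdiv.deriv]
  beta_reduce
  rw [hval, hAval']
  rw [Real.rpow_sub hA (1/(1+γ)) 1, Real.rpow_one]
  have h1' : (1:ℝ)+γ ≠ 0 := h1.ne'
  field_simp
  ring


lemma pdx_ginv_snd (γ : ℝ) (hγ : 0 ≤ γ) (z : (Fin N → ℝ) × (Fin l → ℝ)) (hx : z.1 ≠ 0)
    (j : Fin l) (k : Fin N) :
    pdx (fun w => (ginv γ w).2 j) k z =
      -(2 / (1+γ) * nsq z.1 ^ γ / (gA γ z * gA γ z)) * z.2 j * z.1 k := by
  have h1 : (0:ℝ) < 1 + γ := by linarith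
  have hs : 0 < nsq z.1 := nsq_pos hx
  have hA : 0 < gA γ z := gA_pos γ hγ hx
  have hfun : (fun t => (ginv γ (Function.update z.1 k t, z.2)).2 j)
      = fun t => z.2 j /
          (1/(1+γ)^2 * (nsq z.1 - z.1 k^2 + t^2) ^ (1+γ) + nsq z.2) := by
    funext t
    show z.2 j / gd γ (Function.update z.1 k t, z.2) ^ (2 + 2*γ) = _
    rw [gd_rpow γ hγ]
    congr 1
    show (1 / (1 + γ) ^ 2) * (nsq (Function.update z.1 k t)) ^ (1 + γ) + nsq z.2 = _
    rw [nsq_update]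
  have hval : nsq z.1 - z.1 k ^ 2 + z.1 k ^ 2 = nsq z.1 := by ring
  have hAval' : 1/(1+γ)^2 * (nsq z.1) ^ (1+γ) + nsq z.2 = gA γ z := rfl
  have hu : HasDerivAt (fun t : ℝ => nsq z.1 - z.1 k^2 + t^2) (2 * z.1 k) (z.1 k) := by
    simpa using (hasDerivAt_pow 2 (z.1 k)).const_add (nsq z.1 - z.1 k ^ 2)
  have h2 : HasDerivAt (fun t => (nsq z.1 - z.1 k^2 + t^2) ^ (1+γ))
      (2 * z.1 k * (1+γ) * nsq z.1 ^ (1+γ-1)) (z.1 k) := by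
    have h2' := hu.rpow_const (p := 1+γ) (Or.inl (by rw [hval]; exact hs.ne'))
    beta_reduce at h2'
    rw [hval] at h2'
    exact h2'
  have h3 : HasDerivAt (fun t => 1/(1+γ)^2 * (nsq z.1 - z.1 k^2 + t^2) ^ (1+γ) + nsq z.2)
      (1/(1+γ)^2 * (2 * z.1 k * (1+γ) * nsq z.1 ^ (1+γ-1))) (z.1 k) :=
    (h2.const_mul _).add_const _
  have hDne : 1/(1+γ)^2 * (nsq z.1 - z.1 k^2 + (z.1 k)^2) ^ (1+γ) + nsq z.2 ≠ 0 := by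
    rw [hval, hAval']; exact hA.ne'
  unfold pdx
  beta_reduce
  rw [hfun]
  have hdiv := (hasDerivAt_const (z.1 k) (z.2 j)).fun_div h3 hDne
  rw [hdiv.deriv]
  beta_reduce
  rw [hval, hAval']
  rw [show (1:ℝ)+γ-1 = γ by ring]
  have h1' : (1:ℝ)+γ ≠ 0 := h1.ne'
  field_simp
  ring


lemma pdy_ginv_snd (γ : ℝ) (hγ : 0 ≤ γ) (z : (Fin N → ℝ) × (Fin l → ℝ)) (hx : z.1 ≠ 0)
    (j h : Fin l) :
    pdy (fun w => (ginv γ w).2 j) h z =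
      (if j = h then 1 else 0) / gA γ z - (2 / (gA γ z * gA γ z)) * z.2 j * z.2 h := by
  have hA : 0 < gA γ z := gA_pos γ hγ hx
  have hfun : (fun t => (ginv γ (z.1, Function.update z.2 h t)).2 j)
      = fun t => Function.update z.2 h t j /
          (1/(1+γ)^2 * (nsq z.1) ^ (1+γ) + (nsq z.2 - z.2 h^2 + t^2)) := by
    funext t
    show Function.update z.2 h t j / gd γ (z.1, Function.update z.2 h t) ^ (2 + 2*γ) = _
    rw [gd_rpow γ hγ]
    congr 1
    show (1 / (1 + γ) ^ 2) * (nsq z.1) ^ (1 + γ) + nsq (Function.update z.2 h t) = _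
    rw [nsq_update]
  have hval : nsq z.2 - z.2 h ^ 2 + z.2 h ^ 2 = nsq z.2 := by ring
  have hAval' : 1/(1+γ)^2 * (nsq z.1) ^ (1+γ) + nsq z.2 = gA γ z := rfl
  have hu : HasDerivAt (fun t : ℝ => nsq z.2 - z.2 h^2 + t^2) (2 * z.2 h) (z.2 h) := by
    simpa using (hasDerivAt_pow 2 (z.2 h)).const_add (nsq z.2 - z.2 h ^ 2)
  have h3 : HasDerivAt (fun t => 1/(1+γ)^2 * (nsq z.1) ^ (1+γ) + (nsq z.2 - z.2 h^2 + t^2))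
      (2 * z.2 h) (z.2 h) := hu.const_add _
  have hDne : 1/(1+γ)^2 * (nsq z.1) ^ (1+γ) + (nsq z.2 - z.2 h^2 + (z.2 h)^2) ≠ 0 := by
    rw [hval, hAval']; exact hA.ne'
  unfold pdy
  beta_reduce
  rw [hfun]
  rcases eq_or_ne j h with rfl | hjh
  · have hnum : HasDerivAt (fun t : ℝ => Function.update z.2 j t j) 1 (z.2 j) := by
      have : (fun t : ℝ => Function.update z.2 j t j) = fun t => t := by
        funext t; simp
      rw [this]; exact hasDerivAt_id _
    have hdiv := hnum.fun_div h3 hDne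
    rw [hdiv.deriv]
    beta_reduce
    rw [hval, hAval']
    simp only [if_pos rfl, Function.update_eq_self, eq_self_iff_true, if_true]
    field_simp
  · have hnum : HasDerivAt (fun t : ℝ => Function.update z.2 h t j) 0 (z.2 h) := by
      have : (fun t : ℝ => Function.update z.2 h t j) = fun _ => z.2 j := by
        funext t; simp [Function.update_of_ne hjh]
      rw [this]; exact hasDerivAt_const _ _
    have hdiv := hnum.fun_div h3 hDne
    rw [hdiv.deriv]
    beta_reduce
    rw [hval, hAval']
    simp only [if_neg hjh, Function.update_eq_self]
    field_simp


/-- the mixed (off-diagonal) Jacobian combinations of the Grushin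
inversion all vanish. -/
theorem ginv_jacobian_off_diag (γ : ℝ) (hγ : 0 ≤ γ)
    (z : (Fin N → ℝ) × (Fin l → ℝ)) (hx : z.1 ≠ 0) :
    (∀ i i' : Fin N, i ≠ i' →
      (∑ k, pdx (fun w => (ginv γ w).1 i) k z * pdx (fun w => (ginv γ w).1 i') k z)
        + (nsq z.1) ^ γ *
            ∑ h, pdy (fun w => (ginv γ w).1 i) h z * pdy (fun w => (ginv γ w).1 i') h z
        = 0) ∧
    (∀ j j' : Fin l, j ≠ j' →
      (∑ k, pdx (fun w => (ginv γ w).2 j) k z * pdx (fun w => (ginv γ w).2 j') k z)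
        + (nsq z.1) ^ γ *
            ∑ h, pdy (fun w => (ginv γ w).2 j) h z * pdy (fun w => (ginv γ w).2 j') h z
        = 0) ∧
    (∀ (i : Fin N) (j : Fin l),
      (∑ k, pdx (fun w => (ginv γ w).1 i) k z * pdx (fun w => (ginv γ w).2 j) k z)
        + (nsq z.1) ^ γ *
            ∑ h, pdy (fun w => (ginv γ w).1 i) h z * pdy (fun w => (ginv γ w).2 j) h z
        = 0) := by
  refine ⟨?_, ?_, ?_⟩
  · have h1 : (0:ℝ) < 1 + γ := by linarith
    have h1' : (1:ℝ) + γ ≠ 0 := h1.ne'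
    have hs : 0 < nsq z.1 := nsq_pos hx
    have hA : 0 < gA γ z := gA_pos γ hγ hx
    have hP : 0 < gA γ z ^ (1/(1+γ)) := Real.rpow_pos_of_pos hA _
    have hAs : gA γ z = 1/(1+γ)^2 * (nsq z.1 * nsq z.1 ^ γ) + nsq z.2 := by
      show 1/(1+γ)^2 * (nsq z.1) ^ (1+γ) + nsq z.2 = _
      rw [Real.rpow_add hs, Real.rpow_one]
    intro i i' hii'
    simp only [pdx_ginv_fst γ hγ z hx, pdy_ginv_fst γ hγ z hx]
    set P := gA γ z ^ (1/(1+γ)) with hPdef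
    set a := 2/(1+γ)^2 * nsq z.1 ^ γ / (gA γ z * P) with hadef
    set b := 2/(1+γ)/(gA γ z * P) with hbdef
    have hexp : ∀ k, ((if i = k then (1:ℝ) else 0)/P - a * z.1 i * z.1 k)
        * ((if i' = k then (1:ℝ) else 0)/P - a * z.1 i' * z.1 k)
        = (if i = k then -(a * z.1 i' * z.1 k / P) else 0)
          + ((if i' = k then -(a * z.1 i * z.1 k / P) else 0)
          + (a^2 * z.1 i * z.1 i') * z.1 k^2) := by
      intro k
      by_cases hik : i = k <;> by_cases hi'k : i' = k
      · exact absurd (hik.trans hi'k.symm) hii'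
      · simp only [if_pos hik, if_neg hi'k]; ring
      · simp only [if_neg hik, if_pos hi'k]; ring
      · simp only [if_neg hik, if_neg hi'k]; ring
    have hsum1 : ∑ k, ((if i = k then (1:ℝ) else 0)/P - a * z.1 i * z.1 k)
        * ((if i' = k then (1:ℝ) else 0)/P - a * z.1 i' * z.1 k)
        = -(a * z.1 i' * z.1 i / P) + (-(a * z.1 i * z.1 i' / P)
          + (a^2 * z.1 i * z.1 i') * nsq z.1) := by
      rw [Finset.sum_congr rfl fun k _ => hexp k, Finset.sum_add_distrib,
        Finset.sum_add_distrib, Finset.sum_ite_eq, Finset.sum_ite_eq, ← Finset.mul_sum]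
      simp [nsq]
    have hexp2 : ∀ h, (-b * z.1 i * z.2 h) * (-b * z.1 i' * z.2 h)
        = (b^2 * z.1 i * z.1 i') * z.2 h ^ 2 := fun h => by ring
    have hsum2 : ∑ h, (-b * z.1 i * z.2 h) * (-b * z.1 i' * z.2 h)
        = (b^2 * z.1 i * z.1 i') * nsq z.2 := by
      rw [Finset.sum_congr rfl fun h _ => hexp2 h, ← Finset.mul_sum]; rfl
    have key2 : (1+γ)^2 * gA γ z - nsq z.1 * nsq z.1 ^ γ - (1+γ)^2 * nsq z.2 = 0 := by
      rw [hAs]; field_simp; ring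
    rw [hsum1, hsum2, hadef, hbdef]
    field_simp [hA.ne', hP.ne', h1']
    rw [hAs]; field_simp; ring
  · have h1 : (0:ℝ) < 1 + γ := by linarith
    have h1' : (1:ℝ) + γ ≠ 0 := h1.ne'
    have hs : 0 < nsq z.1 := nsq_pos hx
    have hA : 0 < gA γ z := gA_pos γ hγ hx
    have hAs : gA γ z = 1/(1+γ)^2 * (nsq z.1 * nsq z.1 ^ γ) + nsq z.2 := by
      show 1/(1+γ)^2 * (nsq z.1) ^ (1+γ) + nsq z.2 = _
      rw [Real.rpow_add hs, Real.rpow_one]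
    have hq : nsq z.2 = gA γ z - 1/(1+γ)^2 * (nsq z.1 * nsq z.1 ^ γ) := by rw [hAs]; ring
    intro j j' hjj'
    simp only [pdx_ginv_snd γ hγ z hx, pdy_ginv_snd γ hγ z hx]
    set g := 2/(1+γ) * nsq z.1 ^ γ / (gA γ z * gA γ z) with hgdef
    set r := 2 / (gA γ z * gA γ z) with hrdef
    have hsum1 : ∑ k, (-g * z.2 j * z.1 k) * (-g * z.2 j' * z.1 k)
        = (g^2 * z.2 j * z.2 j') * nsq z.1 := by
      rw [Finset.sum_congr rfl fun k _ =>
        (by ring : (-g * z.2 j * z.1 k) * (-g * z.2 j' * z.1 k)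
          = (g^2 * z.2 j * z.2 j') * z.1 k ^ 2), ← Finset.mul_sum]
      rfl
    have hexp : ∀ h, ((if j = h then (1:ℝ) else 0)/gA γ z - r * z.2 j * z.2 h)
        * ((if j' = h then (1:ℝ) else 0)/gA γ z - r * z.2 j' * z.2 h)
        = (if j = h then -(r * z.2 j' * z.2 h / gA γ z) else 0)
          + ((if j' = h then -(r * z.2 j * z.2 h / gA γ z) else 0)
          + (r^2 * z.2 j * z.2 j') * z.2 h^2) := by
      intro h
      by_cases hjh : j = h <;> by_cases hj'h : j' = h
      · exact absurd (hjh.trans hj'h.symm) hjj'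
      · simp only [if_pos hjh, if_neg hj'h]; ring
      · simp only [if_neg hjh, if_pos hj'h]; ring
      · simp only [if_neg hjh, if_neg hj'h]; ring
    have hsum2 : ∑ h, ((if j = h then (1:ℝ) else 0)/gA γ z - r * z.2 j * z.2 h)
        * ((if j' = h then (1:ℝ) else 0)/gA γ z - r * z.2 j' * z.2 h)
        = -(r * z.2 j' * z.2 j / gA γ z) + (-(r * z.2 j * z.2 j' / gA γ z)
          + (r^2 * z.2 j * z.2 j') * nsq z.2) := by
      rw [Finset.sum_congr rfl fun h _ => hexp h, Finset.sum_add_distrib,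
        Finset.sum_add_distrib, Finset.sum_ite_eq, Finset.sum_ite_eq, ← Finset.mul_sum]
      simp [nsq]
    rw [hsum1, hsum2, hgdef, hrdef]
    field_simp [hA.ne', h1']
    rw [hq]
    field_simp [h1']
    ring
  · have h1 : (0:ℝ) < 1 + γ := by linarith
    have h1' : (1:ℝ) + γ ≠ 0 := h1.ne'
    have hs : 0 < nsq z.1 := nsq_pos hx
    have hA : 0 < gA γ z := gA_pos γ hγ hx
    have hP : 0 < gA γ z ^ (1/(1+γ)) := Real.rpow_pos_of_pos hA _
    have hAs : gA γ z = 1/(1+γ)^2 * (nsq z.1 * nsq z.1 ^ γ) + nsq z.2 := by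
      show 1/(1+γ)^2 * (nsq z.1) ^ (1+γ) + nsq z.2 = _
      rw [Real.rpow_add hs, Real.rpow_one]
    have hq : nsq z.2 = gA γ z - 1/(1+γ)^2 * (nsq z.1 * nsq z.1 ^ γ) := by rw [hAs]; ring
    intro i j
    simp only [pdx_ginv_fst γ hγ z hx, pdy_ginv_fst γ hγ z hx,
      pdx_ginv_snd γ hγ z hx, pdy_ginv_snd γ hγ z hx]
    set P := gA γ z ^ (1/(1+γ)) with hPdef
    set a := 2/(1+γ)^2 * nsq z.1 ^ γ / (gA γ z * P) with hadef
    set b := 2/(1+γ)/(gA γ z * P) with hbdef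
    set g := 2/(1+γ) * nsq z.1 ^ γ / (gA γ z * gA γ z) with hgdef
    set r := 2 / (gA γ z * gA γ z) with hrdef
    have hexp : ∀ k, ((if i = k then (1:ℝ) else 0)/P - a * z.1 i * z.1 k)
        * (-g * z.2 j * z.1 k)
        = (if i = k then -(g * z.2 j * z.1 k / P) else 0)
          + (a * g * z.1 i * z.2 j) * z.1 k^2 := by
      intro k
      by_cases hik : i = k
      · simp only [if_pos hik]; ring
      · simp only [if_neg hik]; ring
    have hsum1 : ∑ k, ((if i = k then (1:ℝ) else 0)/P - a * z.1 i * z.1 k)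
        * (-g * z.2 j * z.1 k)
        = -(g * z.2 j * z.1 i / P) + (a * g * z.1 i * z.2 j) * nsq z.1 := by
      rw [Finset.sum_congr rfl fun k _ => hexp k, Finset.sum_add_distrib,
        Finset.sum_ite_eq, ← Finset.mul_sum]
      simp [nsq]
    have hexp2 : ∀ h, (-b * z.1 i * z.2 h)
        * ((if j = h then (1:ℝ) else 0)/gA γ z - r * z.2 j * z.2 h)
        = (if j = h then -(b * z.1 i * z.2 h / gA γ z) else 0)
          + (b * r * z.1 i * z.2 j) * z.2 h^2 := by
      intro h
      by_cases hjh : j = h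
      · simp only [if_pos hjh]; ring
      · simp only [if_neg hjh]; ring
    have hsum2 : ∑ h, (-b * z.1 i * z.2 h)
        * ((if j = h then (1:ℝ) else 0)/gA γ z - r * z.2 j * z.2 h)
        = -(b * z.1 i * z.2 j / gA γ z) + (b * r * z.1 i * z.2 j) * nsq z.2 := by
      rw [Finset.sum_congr rfl fun h _ => hexp2 h, Finset.sum_add_distrib,
        Finset.sum_ite_eq, ← Finset.mul_sum]
      simp [nsq]
    rw [hsum1, hsum2, hadef, hbdef, hgdef, hrdef]
    field_simp [hA.ne', hP.ne', h1']
    rw [hq]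
    field_simp [h1']
    ring
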